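/- If an Appell sequence (A_n) satisfies the reflection relation A_n(1-x) = (-1)^n A_n(x), then for all r, s ≥ 0 and all x one has the reciprocity relation (-1)^r · A_{r,s}(x) = (-1)^s · A_{s,r}(-x), where A_{r,s}(x) = Σ_{ν=0}^r C(r,ν)·A_{s+ν}(x). -/

import Mathlib

private lemma choose_sub_mul (n m j : ℕ) :
    n.choose m * (n - m).choose j = n.choose j * (n - j).choose m := by
  rcases le_or_gt (m + j) n with h | h
  · have hm : m ≤ n := le_trans (Nat.le_add_right m j) h
    have hj : j ≤ n - m := Nat.le_sub_of_add_le (by omega)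
    have := Nat.choose_mul (n := n) (k := n - m) (s := j) hj
    rw [Nat.choose_symm hm] at this
    rw [this]
    congr 1
    have h1 : n - j - (n - m - j) = m := by omega
    calc (n - j).choose (n - m - j) = (n - j).choose (n - j - (n - m - j)) :=
          (Nat.choose_symm (by omega)).symm
      _ = (n - j).choose m := by rw [h1]
  · rcases le_or_gt m n with hm | hm
    · have h1 : (n - m).choose j = 0 := Nat.choose_eq_zero_of_lt (by omega)
      rcases le_or_gt j n with hj | hj
      · have h2 : (n - j).choose m = 0 := Nat.choose_eq_zero_of_lt (by omega)
        rw [h1, h2]; ring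
      · rw [h1, Nat.choose_eq_zero_of_lt hj]; ring
    · have h2 : (n - j).choose m = 0 := Nat.choose_eq_zero_of_lt (by omega)
      rw [Nat.choose_eq_zero_of_lt hm, h2]; ring

private lemma appell_inner_sum (α : ℕ → ℂ) (n j : ℕ) (hj : j ≤ n) :
    ∑ ν ∈ Finset.range (n + 1), (n.choose ν : ℂ) * (ν.choose j : ℂ) * α (n - ν)
      = ∑ k ∈ Finset.range (n + 1), (n.choose k : ℂ) * (k.choose j : ℂ) * α (k - j) := by
  have key : ∀ m : ℕ, ((n.choose m : ℕ) * ((n - m).choose j) : ℂ)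
      = ((n.choose j : ℕ) * ((n - j).choose m) : ℂ) := by
    intro m; exact_mod_cast congrArg (fun t : ℕ => (t : ℂ)) (choose_sub_mul n m j)
  -- LHS = ∑ m, C(n,j) C(n-j,m) α m
  have hL : ∑ ν ∈ Finset.range (n + 1), (n.choose ν : ℂ) * (ν.choose j : ℂ) * α (n - ν)
      = ∑ m ∈ Finset.range (n + 1), (n.choose j : ℂ) * ((n - j).choose m : ℂ) * α m := by
    rw [← Finset.sum_range_reflect]
    simp only [Nat.add_sub_cancel]
    refine Finset.sum_congr rfl fun m hm => ?_
    have hm' : m ≤ n := Nat.lt_succ_iff.mp (Finset.mem_range.mp hm)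
    have h1 : n - (n - m) = m := by omega
    rw [h1, Nat.choose_symm hm']
    have := key m
    push_cast at this ⊢
    rw [← this]
  -- RHS = ∑ m, C(n,j) C(n-j,m) α m
  have hR : ∑ k ∈ Finset.range (n + 1), (n.choose k : ℂ) * (k.choose j : ℂ) * α (k - j)
      = ∑ m ∈ Finset.range (n + 1), (n.choose j : ℂ) * ((n - j).choose m : ℂ) * α m := by
    rw [Finset.range_eq_Ico, ← Finset.sum_Ico_consecutive _ (Nat.zero_le j) (by omega : j ≤ n + 1)]
    have h0 : ∑ k ∈ Finset.Ico 0 j, (n.choose k : ℂ) * (k.choose j : ℂ) * α (k - j) = 0 := by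
      apply Finset.sum_eq_zero
      intro k hk
      have : k < j := (Finset.mem_Ico.mp hk).2
      rw [Nat.choose_eq_zero_of_lt this]
      push_cast; ring
    rw [h0, zero_add, Finset.sum_Ico_eq_sum_range]
    have h2 : ∀ m ∈ Finset.range (n + 1 - j),
        (n.choose (j + m) : ℂ) * ((j + m).choose j : ℂ) * α (j + m - j)
          = (n.choose j : ℂ) * ((n - j).choose m : ℂ) * α m := by
      intro m hm
      have hjm : j + m ≤ n := by have := Finset.mem_range.mp hm; omega
      have hkey := Nat.choose_mul (n := n) (k := j + m) (s := j) (Nat.le_add_right j m)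
      rw [Nat.add_sub_cancel_left] at hkey
      have hc : ((n.choose (j+m) : ℂ)) * (((j+m).choose j : ℕ) : ℂ)
          = ((n.choose j : ℕ) : ℂ) * (((n-j).choose m : ℕ) : ℂ) := by
        exact_mod_cast congrArg (fun t : ℕ => (t : ℂ)) hkey
      rw [Nat.add_sub_cancel_left]
      linear_combination α m * hc
    rw [Finset.sum_congr rfl h2, ← Finset.range_eq_Ico]
    apply Finset.sum_subset (Finset.range_subset_range.mpr (by omega))
    intro m _ hm
    · have : n - j < m := by
        by_contra h
        exact hm (Finset.mem_range.mpr (by omega))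
      rw [Nat.choose_eq_zero_of_lt this]
      push_cast; ring
  rw [hL, hR]

private lemma appell_trans (α : ℕ → ℂ) (A : ℕ → ℂ → ℂ)
    (hA : ∀ n x, A n x =
      ∑ ν ∈ Finset.range (n + 1), (n.choose ν : ℂ) * α (n - ν) * x ^ ν)
    (n : ℕ) (x : ℂ) :
    A n (x + 1) = ∑ k ∈ Finset.range (n + 1), (n.choose k : ℂ) * A k x := by
  rw [hA]
  have expand : ∀ ν ∈ Finset.range (n + 1),
      (n.choose ν : ℂ) * α (n - ν) * (x + 1) ^ ν
        = ∑ j ∈ Finset.range (n + 1),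
            (n.choose ν : ℂ) * (ν.choose j : ℂ) * α (n - ν) * x ^ j := by
    intro ν hν
    have hν' : ν ≤ n := Nat.lt_succ_iff.mp (Finset.mem_range.mp hν)
    have hp : (x + 1) ^ ν = ∑ j ∈ Finset.range (ν + 1), (ν.choose j : ℂ) * x ^ j := by
      rw [add_pow]
      exact Finset.sum_congr rfl fun j _ => by ring
    have hp2 : (x + 1) ^ ν = ∑ j ∈ Finset.range (n + 1), (ν.choose j : ℂ) * x ^ j := by
      rw [hp]
      apply Finset.sum_subset (Finset.range_subset_range.mpr (by omega))
      intro j _ hj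
      have : ν < j := by
        by_contra h
        exact hj (Finset.mem_range.mpr (by omega))
      rw [Nat.choose_eq_zero_of_lt this]
      push_cast; ring
    rw [hp2, Finset.mul_sum]
    exact Finset.sum_congr rfl fun j _ => by ring
  rw [Finset.sum_congr rfl expand]
  have expandR : ∀ k ∈ Finset.range (n + 1),
      (n.choose k : ℂ) * A k x
        = ∑ j ∈ Finset.range (n + 1),
            (n.choose k : ℂ) * (k.choose j : ℂ) * α (k - j) * x ^ j := by
    intro k hk
    have hk' : k ≤ n := Nat.lt_succ_iff.mp (Finset.mem_range.mp hk)
    rw [hA, Finset.mul_sum]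
    have h1 : ∑ j ∈ Finset.range (k + 1), (n.choose k : ℂ) * ((k.choose j : ℂ) * α (k - j) * x ^ j)
        = ∑ j ∈ Finset.range (n + 1), (n.choose k : ℂ) * ((k.choose j : ℂ) * α (k - j) * x ^ j) := by
      apply Finset.sum_subset (Finset.range_subset_range.mpr (by omega))
      intro j _ hj
      have : k < j := by
        by_contra h
        exact hj (Finset.mem_range.mpr (by omega))
      rw [Nat.choose_eq_zero_of_lt this]
      push_cast; ring
    rw [h1]
    exact Finset.sum_congr rfl fun j _ => by ring
  rw [Finset.sum_congr rfl expandR]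
  rw [Finset.sum_comm]
  conv_rhs => rw [Finset.sum_comm]
  refine Finset.sum_congr rfl fun j hj => ?_
  have hj' : j ≤ n := Nat.lt_succ_iff.mp (Finset.mem_range.mp hj)
  have := appell_inner_sum α n j hj'
  calc ∑ ν ∈ Finset.range (n + 1), (n.choose ν : ℂ) * (ν.choose j : ℂ) * α (n - ν) * x ^ j
      = (∑ ν ∈ Finset.range (n + 1), (n.choose ν : ℂ) * (ν.choose j : ℂ) * α (n - ν)) * x ^ j := by
        rw [Finset.sum_mul]
    _ = (∑ k ∈ Finset.range (n + 1), (n.choose k : ℂ) * (k.choose j : ℂ) * α (k - j)) * x ^ j := by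
        rw [this]
    _ = ∑ k ∈ Finset.range (n + 1), (n.choose k : ℂ) * (k.choose j : ℂ) * α (k - j) * x ^ j := by
        rw [Finset.sum_mul]

private lemma appell_neg (α : ℕ → ℂ) (A : ℕ → ℂ → ℂ)
    (hA : ∀ n x, A n x =
      ∑ ν ∈ Finset.range (n + 1), (n.choose ν : ℂ) * α (n - ν) * x ^ ν)
    (href : ∀ n x, A n (1 - x) = (-1) ^ n * A n x)
    (n : ℕ) (x : ℂ) :
    A n (-x) = (-1) ^ n * ∑ k ∈ Finset.range (n + 1), (n.choose k : ℂ) * A k x := by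
  have h := href n (1 + x)
  rw [show (1 : ℂ) - (1 + x) = -x by ring] at h
  rw [h, show (1 : ℂ) + x = x + 1 by ring, appell_trans α A hA]

private lemma appell_B_rec (A : ℕ → ℂ → ℂ) (r s : ℕ) (x : ℂ) :
    ∑ ν ∈ Finset.range (r + 1 + 1), ((r + 1).choose ν : ℂ) * A (s + ν) x
      = (∑ ν ∈ Finset.range (r + 1), (r.choose ν : ℂ) * A (s + ν) x)
        + ∑ ν ∈ Finset.range (r + 1), (r.choose ν : ℂ) * A (s + 1 + ν) x := by
  rw [Finset.sum_range_succ' (fun ν => ((r + 1).choose ν : ℂ) * A (s + ν) x)]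
  simp only [Nat.choose_succ_succ, Nat.choose_zero_right, Nat.cast_add, Nat.cast_one]
  have h1 : ∑ ν ∈ Finset.range (r + 1),
      ((r.choose ν : ℂ) + (r.choose (ν + 1) : ℂ)) * A (s + (ν + 1)) x
      = (∑ ν ∈ Finset.range (r + 1), (r.choose (ν + 1) : ℂ) * A (s + (ν + 1)) x)
        + ∑ ν ∈ Finset.range (r + 1), (r.choose ν : ℂ) * A (s + 1 + ν) x := by
    rw [← Finset.sum_add_distrib]
    refine Finset.sum_congr rfl fun ν _ => ?_
    rw [show s + 1 + ν = s + (ν + 1) by omega]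
    ring
  rw [h1]
  have h2 : (∑ ν ∈ Finset.range (r + 1), (r.choose (ν + 1) : ℂ) * A (s + (ν + 1)) x)
      + 1 * A (s + 0) x
      = ∑ ν ∈ Finset.range (r + 1), (r.choose ν : ℂ) * A (s + ν) x := by
    rw [Finset.sum_range_succ' (fun ν => (r.choose ν : ℂ) * A (s + ν) x),
      Finset.sum_range_succ (fun ν => (r.choose (ν + 1) : ℂ) * A (s + (ν + 1)) x),
      Nat.choose_succ_self]
    simp
  linear_combination h2

theorem appell_rank_shift_reciprocity (α : ℕ → ℂ) (A : ℕ → ℂ → ℂ)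
    (hA : ∀ n x, A n x =
      ∑ ν ∈ Finset.range (n + 1), (n.choose ν : ℂ) * α (n - ν) * x ^ ν)
    (href : ∀ n x, A n (1 - x) = (-1) ^ n * A n x)
    (r s : ℕ) (x : ℂ) :
    (-1) ^ r * ∑ ν ∈ Finset.range (r + 1), (r.choose ν : ℂ) * A (s + ν) x
      = (-1) ^ s * ∑ ν ∈ Finset.range (s + 1), (s.choose ν : ℂ) * A (r + ν) (-x) := by
  induction r generalizing s with
  | zero =>
    have h := appell_neg α A hA href s (-x)
    rw [neg_neg] at h
    simp only [pow_zero, one_mul, Finset.sum_range_one, Nat.choose_zero_right, Nat.cast_one,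
      Nat.add_zero, Nat.zero_add]
    exact h
  | succ r ih =>
    have h1 := ih s
    have h2 := ih (s + 1)
    calc (-1) ^ (r + 1) * ∑ ν ∈ Finset.range (r + 1 + 1), ((r + 1).choose ν : ℂ) * A (s + ν) x
        = (-1) ^ (r + 1) * ((∑ ν ∈ Finset.range (r + 1), (r.choose ν : ℂ) * A (s + ν) x)
            + ∑ ν ∈ Finset.range (r + 1), (r.choose ν : ℂ) * A (s + 1 + ν) x) := by
          rw [appell_B_rec A r s x]
      _ = -((-1) ^ r * ∑ ν ∈ Finset.range (r + 1), (r.choose ν : ℂ) * A (s + ν) x)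
            - (-1) ^ r * ∑ ν ∈ Finset.range (r + 1), (r.choose ν : ℂ) * A (s + 1 + ν) x := by
          ring
      _ = -((-1) ^ s * ∑ ν ∈ Finset.range (s + 1), (s.choose ν : ℂ) * A (r + ν) (-x))
            - (-1) ^ (s + 1) * ∑ ν ∈ Finset.range (s + 1 + 1), ((s + 1).choose ν : ℂ) * A (r + ν) (-x) := by
          rw [h1, h2]
      _ = (-1) ^ s * ∑ ν ∈ Finset.range (s + 1), (s.choose ν : ℂ) * A (r + 1 + ν) (-x) := by
          rw [appell_B_rec A s r (-x)]
          ring
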